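/- Let p be an odd prime. Then the automorphism group of the graph C(2;p,2) has order 2^{p+1} · p. -/

import Mathlib

namespace HAT

variable {V : Type*} {W : Type*}

/-- The automorphism group of a simple graph, as a subgroup of the permutation
group of the vertex set. -/
def autSubgroup (X : SimpleGraph V) : Subgroup (Equiv.Perm V) where
  carrier := {g | ∀ u v : V, X.Adj (g u) (g v) ↔ X.Adj u v}
  one_mem' := by intro u v; simp
  mul_mem' := by
    intro a b ha hb u v
    simp only [Equiv.Perm.mul_apply]
    rw [ha, hb]
  inv_mem' := by
    intro a ha u v
    have h := (ha (a⁻¹ u) (a⁻¹ v)).symm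
    simpa using h

/-- A subgroup of the permutation group of the vertex set acts transitively on vertices. -/
def VertexTransitive (G : Subgroup (Equiv.Perm V)) : Prop :=
  ∀ u v : V, ∃ g ∈ G, g u = v

/-- `G` acts transitively on the edges of `X`. -/
def EdgeTransitive (X : SimpleGraph V) (G : Subgroup (Equiv.Perm V)) : Prop :=
  ∀ ⦃u v x y : V⦄, X.Adj u v → X.Adj x y →
    ∃ g ∈ G, (g u = x ∧ g v = y) ∨ (g u = y ∧ g v = x)

/-- `G` acts transitively on the arcs of `X`. -/
def ArcTransitive (X : SimpleGraph V) (G : Subgroup (Equiv.Perm V)) : Prop :=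
  ∀ ⦃u v x y : V⦄, X.Adj u v → X.Adj x y → ∃ g ∈ G, g u = x ∧ g v = y

/-- `G` acts sharply transitively (regularly) on the arcs of `X`. -/
def ArcRegular (X : SimpleGraph V) (G : Subgroup (Equiv.Perm V)) : Prop :=
  ∀ ⦃u v x y : V⦄, X.Adj u v → X.Adj x y →
    ∃! g : G, (g : Equiv.Perm V) u = x ∧ (g : Equiv.Perm V) v = y

/-- `X` is `G`-half-arc-transitive. -/
def HalfArcTransitive (X : SimpleGraph V) (G : Subgroup (Equiv.Perm V)) : Prop :=
  VertexTransitive G ∧ EdgeTransitive X G ∧ ¬ ArcTransitive X G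

/-- `X` is regular of degree `k`. -/
def RegularOfDegree (X : SimpleGraph V) (k : ℕ) : Prop :=
  ∀ v : V, Nat.card (X.neighborSet v) = k

/-- A group of permutations acts semiregularly: all point stabilizers are trivial. -/
def Semiregular (N : Subgroup (Equiv.Perm V)) : Prop :=
  ∀ g ∈ N, (∃ v : V, g v = v) → g = 1

/-- A graph is a Cayley graph iff its automorphism group contains a subgroup
acting regularly (sharply transitively) on the vertices. -/
def IsCayleyGraph (X : SimpleGraph V) : Prop :=
  ∃ H : Subgroup (Equiv.Perm V), H ≤ autSubgroup X ∧
    ∀ u v : V, ∃! h : H, (h : Equiv.Perm V) u = v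

/-- The set of `N`-orbits on the vertex set. -/
abbrev Orbits (N : Subgroup (Equiv.Perm V)) : Type _ := Quotient (MulAction.orbitRel N V)

/-- The `N`-orbit of a vertex. -/
def orbitMk (N : Subgroup (Equiv.Perm V)) (v : V) : Orbits N :=
  Quotient.mk (MulAction.orbitRel N V) v

/-- The quotient graph `X_N`: vertices are the `N`-orbits, two orbits being adjacent
iff some vertex of one is adjacent in `X` to some vertex of the other. -/
def quotientGraph (X : SimpleGraph V) (N : Subgroup (Equiv.Perm V)) :
    SimpleGraph (Orbits N) :=
  SimpleGraph.fromRel (fun B C => ∃ u v : V, orbitMk N u = B ∧ orbitMk N v = C ∧ X.Adj u v)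

/-- `X` is an `N`-regular covering of the quotient graph `X_N`: `N` is semiregular and
the orbit projection maps each neighbourhood bijectively onto the neighbourhood of the
corresponding orbit. -/
def IsRegularCover (X : SimpleGraph V) (N : Subgroup (Equiv.Perm V)) : Prop :=
  Semiregular N ∧
    ∀ v : V, Set.BijOn (orbitMk N) (X.neighborSet v)
      ((quotientGraph X N).neighborSet (orbitMk N v))

/-- The permutations of the orbit set induced by elements of `G` (this is the image of
the natural action of `G/N` when `N` is normal in `G`). -/
def inducedQuotSubgroup (G N : Subgroup (Equiv.Perm V)) :
    Subgroup (Equiv.Perm (Orbits N)) where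
  carrier := {σ | ∃ g ∈ G, ∀ u : V, σ (orbitMk N u) = orbitMk N (g u)}
  one_mem' := ⟨1, G.one_mem, fun u => by simp⟩
  mul_mem' := by
    rintro σ τ ⟨g, hg, hgs⟩ ⟨h, hh, hhs⟩
    refine ⟨g * h, G.mul_mem hg hh, fun u => ?_⟩
    simp [Equiv.Perm.mul_apply, hhs u, hgs (h u)]
  inv_mem' := by
    rintro σ ⟨g, hg, hgs⟩
    refine ⟨g⁻¹, G.inv_mem hg, fun u => ?_⟩
    have h1 := hgs (g⁻¹ u)
    rw [show g (g⁻¹ u) = u from g.apply_symm_apply u] at h1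
    rw [← h1]
    exact σ.symm_apply_apply _

/-- A voltage assignment on the arcs of `Y` with values in the group `K`. -/
def IsVoltage (Y : SimpleGraph W) (K : Type*) [Group K] (ξ : W → W → K) : Prop :=
  ∀ u v : W, Y.Adj u v → ξ v u = (ξ u v)⁻¹

/-- The derived graph `Y ×_ξ K` of a voltage assignment `ξ`. -/
def derivedGraph (Y : SimpleGraph W) {K : Type*} [Group K] (ξ : W → W → K) :
    SimpleGraph (W × K) :=
  SimpleGraph.fromRel (fun a b => Y.Adj a.1 b.1 ∧ b.2 = ξ a.1 b.1 * a.2)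

/-- The graph `X(r; m, n)`: vertices `Z_m × Z_n`, with `(i,j)` adjacent to
`(i+1, j ± r^i)`. -/
def XG (m : ℕ) {n : ℕ} (r : (ZMod n)ˣ) : SimpleGraph (ZMod m × ZMod n) :=
  SimpleGraph.fromRel (fun a b =>
    b.1 = a.1 + 1 ∧
      (b.2 = a.2 + (r : ZMod n) ^ (a.1.val) ∨ b.2 = a.2 - (r : ZMod n) ^ (a.1.val)))

/-- The Praeger–Xu graph `C(2;p,2)`: vertices `Z_p × Z_2 × Z_2`, with `(i,(x,y))`
adjacent to `(i+1,(y,z))`. -/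
def Cp22 (p : ℕ) : SimpleGraph (ZMod p × ZMod 2 × ZMod 2) :=
  SimpleGraph.fromRel (fun a b => b.1 = a.1 + 1 ∧ b.2.1 = a.2.2)

/-- The lexicographic product `C_n[2K_1]`: vertices `Z_n × Z_2`, with `(i,x)`
adjacent to `(j,y)` iff `j = i ± 1`. -/
def cyc2K1 (n : ℕ) : SimpleGraph (ZMod n × ZMod 2) :=
  SimpleGraph.fromRel (fun a b => b.1 = a.1 + 1)

/-- The wreath graph `W(6,2)`: vertices `Z_6 × Z_2`, with `(i,x)` adjacent to `(i+1,y)`. -/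
def W62 : SimpleGraph (ZMod 6 × ZMod 2) :=
  SimpleGraph.fromRel (fun a b => b.1 = a.1 + 1)

/-- Base relation for the Rose Window graph `R_6(5,4)`: `inl i` is `S_i`, `inr i` is `Q_i`. -/
def roseR : (ZMod 6 ⊕ ZMod 6) → (ZMod 6 ⊕ ZMod 6) → Prop
  | Sum.inl i, Sum.inl j => j = i + 1
  | Sum.inl i, Sum.inr j => j = i ∨ i = j + 5
  | Sum.inr i, Sum.inr j => j = i + 4
  | Sum.inr _, Sum.inl _ => False

/-- The Rose Window graph `R_6(5,4)`. -/
def roseWindow : SimpleGraph (ZMod 6 ⊕ ZMod 6) := SimpleGraph.fromRel roseR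

/-- An elementary abelian `q`-group. -/
def IsElementaryAbelian (q : ℕ) (H : Type*) [Group H] : Prop :=
  (∀ a b : H, a * b = b * a) ∧ ∀ x : H, x ≠ 1 → orderOf x = q

section Aux15

variable {p : ℕ}

lemma perm_apply_inv_self' {α : Type*} (g : Equiv.Perm α) (x : α) : g (g⁻¹ x) = x :=
  g.apply_symm_apply x

private lemma z2add : ∀ a b : ZMod 2, a + b + b = a := by decide

private lemma z2cases : ∀ a : ZMod 2, a = 0 ∨ a = 1 := by decide

private lemma z2ne : ∀ a b : ZMod 2, a ≠ b → b = a + 1 := by decide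

lemma mem_autSubgroup_iff {X : SimpleGraph (ZMod p × ZMod 2 × ZMod 2)}
    {g : Equiv.Perm (ZMod p × ZMod 2 × ZMod 2)} :
    g ∈ autSubgroup X ↔ ∀ u v, X.Adj (g u) (g v) ↔ X.Adj u v := Iff.rfl

lemma cp22_adj (h1 : (1 : ZMod p) ≠ 0) (u v : ZMod p × ZMod 2 × ZMod 2) :
    (Cp22 p).Adj u v ↔
      (v.1 = u.1 + 1 ∧ v.2.1 = u.2.2) ∨ (u.1 = v.1 + 1 ∧ u.2.1 = v.2.2) := by
  simp only [Cp22, SimpleGraph.fromRel_adj]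
  constructor
  · rintro ⟨-, h⟩; exact h
  · intro h
    refine ⟨?_, h⟩
    rintro rfl
    rcases h with ⟨ha, -⟩ | ⟨ha, -⟩ <;> exact h1 (by linear_combination -ha)

/-- the "Fr" rotation-type maps -/
def Fr (k : ZMod p) (ε : ZMod p → ZMod 2) : Equiv.Perm (ZMod p × ZMod 2 × ZMod 2) where
  toFun v := (v.1 + k, v.2.1 + ε (v.1 - 1), v.2.2 + ε v.1)
  invFun v := (v.1 - k, v.2.1 + ε (v.1 - k - 1), v.2.2 + ε (v.1 - k))
  left_inv := fun v => by
    obtain ⟨i, x, y⟩ := v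
    simp only [add_sub_cancel_right, Prod.mk.injEq]
    exact ⟨trivial, z2add x _, z2add y _⟩
  right_inv := fun v => by
    obtain ⟨i, x, y⟩ := v
    simp only [sub_add_cancel, Prod.mk.injEq]
    exact ⟨trivial, z2add x _, z2add y _⟩

/-- the "Gr" reflection-type maps -/
def Gr (k : ZMod p) (ε : ZMod p → ZMod 2) : Equiv.Perm (ZMod p × ZMod 2 × ZMod 2) where
  toFun v := (k - v.1, v.2.2 + ε v.1, v.2.1 + ε (v.1 - 1))
  invFun v := (k - v.1, v.2.2 + ε (k - v.1 - 1), v.2.1 + ε (k - v.1))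
  left_inv := fun v => by
    obtain ⟨i, x, y⟩ := v
    simp only [sub_sub_cancel, Prod.mk.injEq]
    exact ⟨trivial, z2add x _, z2add y _⟩
  right_inv := fun v => by
    obtain ⟨i, x, y⟩ := v
    simp only [sub_sub_cancel, Prod.mk.injEq]
    exact ⟨trivial, z2add x _, z2add y _⟩

@[simp] lemma Fr_apply (k : ZMod p) (ε : ZMod p → ZMod 2) (v) :
    Fr k ε v = (v.1 + k, v.2.1 + ε (v.1 - 1), v.2.2 + ε v.1) := rfl

@[simp] lemma Gr_apply (k : ZMod p) (ε : ZMod p → ZMod 2) (v) :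
    Gr k ε v = (k - v.1, v.2.2 + ε v.1, v.2.1 + ε (v.1 - 1)) := rfl

@[simp] lemma Fr_inv_apply (k : ZMod p) (ε : ZMod p → ZMod 2) (v) :
    (Fr k ε)⁻¹ v = (v.1 - k, v.2.1 + ε (v.1 - k - 1), v.2.2 + ε (v.1 - k)) := rfl

@[simp] lemma Gr_inv_apply (k : ZMod p) (ε : ZMod p → ZMod 2) (v) :
    (Gr k ε)⁻¹ v = (k - v.1, v.2.2 + ε (k - v.1 - 1), v.2.1 + ε (k - v.1)) := rfl

lemma Fr_mem (h1 : (1 : ZMod p) ≠ 0) (k : ZMod p) (ε : ZMod p → ZMod 2) :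
    Fr k ε ∈ autSubgroup (Cp22 p) := by
  intro u v
  rw [cp22_adj h1, cp22_adj h1]
  simp only [Fr_apply]
  constructor
  · rintro (⟨a, b⟩ | ⟨a, b⟩)
    · have hv : v.1 - 1 = u.1 := by linear_combination a
      rw [hv] at b
      exact Or.inl ⟨by linear_combination a, by linear_combination b⟩
    · have hu : u.1 - 1 = v.1 := by linear_combination a
      rw [hu] at b
      exact Or.inr ⟨by linear_combination a, by linear_combination b⟩
  · rintro (⟨a, b⟩ | ⟨a, b⟩)
    · refine Or.inl ⟨by linear_combination a, ?_⟩
      rw [show v.1 - 1 = u.1 by linear_combination a]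
      linear_combination b
    · refine Or.inr ⟨by linear_combination a, ?_⟩
      rw [show u.1 - 1 = v.1 by linear_combination a]
      linear_combination b

lemma Gr_mem (h1 : (1 : ZMod p) ≠ 0) (k : ZMod p) (ε : ZMod p → ZMod 2) :
    Gr k ε ∈ autSubgroup (Cp22 p) := by
  intro u v
  rw [cp22_adj h1, cp22_adj h1]
  simp only [Gr_apply]
  constructor
  · rintro (⟨a, b⟩ | ⟨a, b⟩)
    · have hu : u.1 - 1 = v.1 := by linear_combination a
      rw [hu] at b
      exact Or.inr ⟨by linear_combination a, by linear_combination -b⟩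
    · have hv : v.1 - 1 = u.1 := by linear_combination a
      rw [hv] at b
      exact Or.inl ⟨by linear_combination a, by linear_combination -b⟩
  · rintro (⟨a, b⟩ | ⟨a, b⟩)
    · refine Or.inr ⟨by linear_combination a, ?_⟩
      rw [show v.1 - 1 = u.1 by linear_combination a]
      linear_combination -b
    · refine Or.inl ⟨by linear_combination a, ?_⟩
      rw [show u.1 - 1 = v.1 by linear_combination a]
      linear_combination -b

/-- `u` and `v` have at least two common neighbours, and are distinct. -/
def TCrel (p : ℕ) (u v : ZMod p × ZMod 2 × ZMod 2) : Prop :=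
  u ≠ v ∧ ∃ w w' : ZMod p × ZMod 2 × ZMod 2, w ≠ w' ∧
    (Cp22 p).Adj u w ∧ (Cp22 p).Adj v w ∧ (Cp22 p).Adj u w' ∧ (Cp22 p).Adj v w'

private lemma common_pin (h1 : (1 : ZMod p) ≠ 0)
    {u v w : ZMod p × ZMod 2 × ZMod 2} (hcol : u.1 ≠ v.1)
    (a1 : (Cp22 p).Adj u w) (a2 : (Cp22 p).Adj v w) :
    (v.1 = u.1 + 2 ∧ w = (u.1 + 1, u.2.2, v.2.1)) ∨
      (u.1 = v.1 + 2 ∧ w = (v.1 + 1, v.2.2, u.2.1)) := by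
  rw [cp22_adj h1] at a1 a2
  obtain ⟨wi, wx, wy⟩ := w
  rcases a1 with ⟨b1, c1⟩ | ⟨b1, c1⟩ <;> rcases a2 with ⟨b2, c2⟩ | ⟨b2, c2⟩
  · exact absurd (by linear_combination b2 - b1) hcol
  · refine Or.inl ⟨by linear_combination b2 + b1, ?_⟩
    simp only [Prod.mk.injEq] at b1 c1 b2 c2 ⊢
    exact ⟨b1, c1, c2.symm⟩
  · refine Or.inr ⟨by linear_combination b1 + b2, ?_⟩
    simp only [Prod.mk.injEq] at b1 c1 b2 c2 ⊢
    exact ⟨b2, c2, c1.symm⟩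
  · exact absurd (by linear_combination b1 - b2) hcol

lemma TCrel_iff (h1 : (1 : ZMod p) ≠ 0) (h2 : (2 : ZMod p) ≠ 0) (h4 : (4 : ZMod p) ≠ 0)
    (u v : ZMod p × ZMod 2 × ZMod 2) :
    TCrel p u v ↔ u.1 = v.1 ∧ u ≠ v ∧ (u.2.1 = v.2.1 ∨ u.2.2 = v.2.2) := by
  constructor
  · rintro ⟨hne, w, w', hww, a1, a2, a3, a4⟩
    have hcol : u.1 = v.1 := by
      by_contra hcol
      rcases common_pin h1 hcol a1 a2 with ⟨hd, rfl⟩ | ⟨hd, rfl⟩ <;>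
        rcases common_pin h1 hcol a3 a4 with ⟨hd', rfl⟩ | ⟨hd', rfl⟩
      · exact hww rfl
      · exact h4 (by linear_combination -hd - hd')
      · exact h4 (by linear_combination -hd - hd')
      · exact hww rfl
    refine ⟨hcol, hne, ?_⟩
    by_contra hxy
    push_neg at hxy
    rw [cp22_adj h1] at a1 a2
    rcases a1 with ⟨b1, c1⟩ | ⟨b1, c1⟩ <;> rcases a2 with ⟨b2, c2⟩ | ⟨b2, c2⟩
    · exact hxy.2 (c1.symm.trans c2)
    · exact h2 (by linear_combination -b1 - b2 - hcol)
    · exact h2 (by linear_combination -b1 - b2 + hcol)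
    · exact hxy.1 (c1.trans c2.symm)
  · rintro ⟨hcol, hne, hx | hy⟩
    · refine ⟨hne, (u.1 - 1, 0, u.2.1), (u.1 - 1, 1, u.2.1), ?_, ?_, ?_, ?_, ?_⟩
      · intro h
        simp only [Prod.mk.injEq] at h
        exact absurd h.2.1 (by decide)
      · exact (cp22_adj h1 _ _).mpr (Or.inr ⟨by linear_combination, rfl⟩)
      · exact (cp22_adj h1 _ _).mpr (Or.inr ⟨by linear_combination -hcol, hx.symm ▸ rfl⟩)
      · exact (cp22_adj h1 _ _).mpr (Or.inr ⟨by linear_combination, rfl⟩)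
      · exact (cp22_adj h1 _ _).mpr (Or.inr ⟨by linear_combination -hcol, hx.symm ▸ rfl⟩)
    · refine ⟨hne, (u.1 + 1, u.2.2, 0), (u.1 + 1, u.2.2, 1), ?_, ?_, ?_, ?_, ?_⟩
      · intro h
        simp only [Prod.mk.injEq] at h
        exact absurd h.2.2 (by decide)
      · exact (cp22_adj h1 _ _).mpr (Or.inl ⟨rfl, rfl⟩)
      · exact (cp22_adj h1 _ _).mpr (Or.inl ⟨by linear_combination hcol, hy.symm ▸ rfl⟩)
      · exact (cp22_adj h1 _ _).mpr (Or.inl ⟨rfl, rfl⟩)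
      · exact (cp22_adj h1 _ _).mpr (Or.inl ⟨by linear_combination hcol, hy.symm ▸ rfl⟩)

lemma TCrel_map (g : Equiv.Perm (ZMod p × ZMod 2 × ZMod 2))
    (hg : g ∈ autSubgroup (Cp22 p)) (u v : ZMod p × ZMod 2 × ZMod 2) :
    TCrel p (g u) (g v) ↔ TCrel p u v := by
  have hg' : ∀ u v, (Cp22 p).Adj (g u) (g v) ↔ (Cp22 p).Adj u v := hg
  constructor
  · rintro ⟨hne, w, w', hww, a1, a2, a3, a4⟩
    refine ⟨fun h => hne (congrArg g h), g⁻¹ w, g⁻¹ w',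
      fun h => hww (by simpa using congrArg g h), ?_, ?_, ?_, ?_⟩
    · exact (hg' u (g⁻¹ w)).mp (by rwa [perm_apply_inv_self'])
    · exact (hg' v (g⁻¹ w)).mp (by rwa [perm_apply_inv_self'])
    · exact (hg' u (g⁻¹ w')).mp (by rwa [perm_apply_inv_self'])
    · exact (hg' v (g⁻¹ w')).mp (by rwa [perm_apply_inv_self'])
  · rintro ⟨hne, w, w', hww, a1, a2, a3, a4⟩
    exact ⟨fun h => hne (g.injective h), g w, g w', fun h => hww (g.injective h),
      (hg' u w).mpr a1, (hg' v w).mpr a2, (hg' u w').mpr a3, (hg' v w').mpr a4⟩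

private def SCrel (p : ℕ) (u v : ZMod p × ZMod 2 × ZMod 2) : Prop :=
  u = v ∨ TCrel p u v ∨ ∃ w, TCrel p u w ∧ TCrel p w v

private lemma SCrel_iff (h1 : (1 : ZMod p) ≠ 0) (h2 : (2 : ZMod p) ≠ 0)
    (h4 : (4 : ZMod p) ≠ 0) (u v : ZMod p × ZMod 2 × ZMod 2) :
    SCrel p u v ↔ u.1 = v.1 := by
  constructor
  · rintro (rfl | h | ⟨w, hw1, hw2⟩)
    · rfl
    · exact ((TCrel_iff h1 h2 h4 u v).mp h).1
    · exact (((TCrel_iff h1 h2 h4 u w).mp hw1).1).trans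
        (((TCrel_iff h1 h2 h4 w v).mp hw2).1)
  · intro hcol
    by_cases hne : u = v
    · exact Or.inl hne
    by_cases hxy : u.2.1 = v.2.1 ∨ u.2.2 = v.2.2
    · exact Or.inr (Or.inl ((TCrel_iff h1 h2 h4 u v).mpr ⟨hcol, hne, hxy⟩))
    push_neg at hxy
    refine Or.inr (Or.inr ⟨(u.1, u.2.1, v.2.2), ?_, ?_⟩)
    · refine (TCrel_iff h1 h2 h4 _ _).mpr ⟨rfl, ?_, Or.inl rfl⟩
      intro h
      exact hxy.2 (congrArg (fun z => z.2.2) h)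
    · refine (TCrel_iff h1 h2 h4 _ _).mpr ⟨hcol, ?_, Or.inr rfl⟩
      intro h
      exact hxy.1 (congrArg (fun z => z.2.1) h)

lemma col_map (h1 : (1 : ZMod p) ≠ 0) (h2 : (2 : ZMod p) ≠ 0) (h4 : (4 : ZMod p) ≠ 0)
    (g : Equiv.Perm (ZMod p × ZMod 2 × ZMod 2)) (hg : g ∈ autSubgroup (Cp22 p))
    (u v : ZMod p × ZMod 2 × ZMod 2) :
    (g u).1 = (g v).1 ↔ u.1 = v.1 := by
  rw [← SCrel_iff h1 h2 h4, ← SCrel_iff h1 h2 h4]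
  unfold SCrel
  constructor
  · rintro (h | h | ⟨w, hw1, hw2⟩)
    · exact Or.inl (g.injective h)
    · exact Or.inr (Or.inl ((TCrel_map g hg u v).mp h))
    · refine Or.inr (Or.inr ⟨g⁻¹ w, ?_, ?_⟩)
      · exact (TCrel_map g hg u (g⁻¹ w)).mp (by rwa [perm_apply_inv_self'])
      · exact (TCrel_map g hg (g⁻¹ w) v).mp (by rwa [perm_apply_inv_self'])
  · rintro (rfl | h | ⟨w, hw1, hw2⟩)
    · exact Or.inl rfl
    · exact Or.inr (Or.inl ((TCrel_map g hg u v).mpr h))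
    · exact Or.inr (Or.inr ⟨g w, (TCrel_map g hg u w).mpr hw1, (TCrel_map g hg w v).mpr hw2⟩)

private lemma eq_x_iff (h1 : (1 : ZMod p) ≠ 0) (h2 : (2 : ZMod p) ≠ 0)
    (u v : ZMod p × ZMod 2 × ZMod 2) (hcol : u.1 = v.1) :
    u.2.1 = v.2.1 ↔ ∃ w, (Cp22 p).Adj u w ∧ (Cp22 p).Adj v w ∧ w.1 + 1 = u.1 := by
  constructor
  · intro hx
    refine ⟨(u.1 - 1, 0, u.2.1), ?_, ?_, by linear_combination⟩
    · exact (cp22_adj h1 _ _).mpr (Or.inr ⟨by linear_combination, rfl⟩)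
    · exact (cp22_adj h1 _ _).mpr (Or.inr ⟨by linear_combination -hcol, hx.symm ▸ rfl⟩)
  · rintro ⟨w, a1, a2, hw⟩
    rw [cp22_adj h1] at a1 a2
    rcases a1 with ⟨b1, c1⟩ | ⟨b1, c1⟩
    · exact absurd (show (2 : ZMod p) = 0 by linear_combination hw - b1) h2
    rcases a2 with ⟨b2, c2⟩ | ⟨b2, c2⟩
    · exact absurd (show (2 : ZMod p) = 0 by linear_combination hw - b2 + hcol) h2
    exact c1.trans c2.symm

private lemma eq_y_iff (h1 : (1 : ZMod p) ≠ 0) (h2 : (2 : ZMod p) ≠ 0)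
    (u v : ZMod p × ZMod 2 × ZMod 2) (hcol : u.1 = v.1) :
    u.2.2 = v.2.2 ↔ ∃ w, (Cp22 p).Adj u w ∧ (Cp22 p).Adj v w ∧ w.1 = u.1 + 1 := by
  constructor
  · intro hy
    refine ⟨(u.1 + 1, u.2.2, 0), ?_, ?_, rfl⟩
    · exact (cp22_adj h1 _ _).mpr (Or.inl ⟨rfl, rfl⟩)
    · exact (cp22_adj h1 _ _).mpr (Or.inl ⟨by linear_combination hcol, hy.symm ▸ rfl⟩)
  · rintro ⟨w, a1, a2, hw⟩
    rw [cp22_adj h1] at a1 a2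
    rcases a1 with ⟨b1, c1⟩ | ⟨b1, c1⟩
    swap
    · exact absurd (show (2 : ZMod p) = 0 by linear_combination -b1 - hw) h2
    rcases a2 with ⟨b2, c2⟩ | ⟨b2, c2⟩
    swap
    · exact absurd (show (2 : ZMod p) = 0 by linear_combination -b2 - hw - hcol) h2
    exact c1.symm.trans c2

lemma rigid (hp : p.Prime) (h1 : (1 : ZMod p) ≠ 0) (h2 : (2 : ZMod p) ≠ 0)
    (h4 : (4 : ZMod p) ≠ 0) (g : Equiv.Perm (ZMod p × ZMod 2 × ZMod 2))
    (hg : g ∈ autSubgroup (Cp22 p))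
    (hc0 : (g (0, 0, 0)).1 = 0) (hc1 : (g (1, 0, 0)).1 = 1) :
    ∃ ε : ZMod p → ZMod 2, g = Fr 0 ε := by
  haveI : NeZero p := ⟨hp.ne_zero⟩
  have hg' : ∀ u v, (Cp22 p).Adj (g u) (g v) ↔ (Cp22 p).Adj u v := hg
  have hcu : ∀ u : ZMod p × ZMod 2 × ZMod 2, (g u).1 = (g (u.1, 0, 0)).1 := fun u =>
    (col_map h1 h2 h4 g hg u (u.1, 0, 0)).mpr rfl
  have hcinj : ∀ i j : ZMod p, (g (i, 0, 0)).1 = (g (j, 0, 0)).1 → i = j := fun i j h =>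
    (col_map h1 h2 h4 g hg (i, 0, 0) (j, 0, 0)).mp h
  have hstep : ∀ i : ZMod p,
      (g (i + 1, 0, 0)).1 = (g (i, 0, 0)).1 + 1 ∨
        (g (i, 0, 0)).1 = (g (i + 1, 0, 0)).1 + 1 := by
    intro i
    have hadj : (Cp22 p).Adj ((i : ZMod p), (0 : ZMod 2), (0 : ZMod 2)) (i + 1, 0, 0) :=
      (cp22_adj h1 _ _).mpr (Or.inl ⟨rfl, rfl⟩)
    have h := (hg' (i, 0, 0) (i + 1, 0, 0)).mpr hadj
    rw [cp22_adj h1] at h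
    rcases h with ⟨a, -⟩ | ⟨a, -⟩
    · exact Or.inl a
    · exact Or.inr a
  have key : ∀ n : ℕ, (g ((n : ZMod p), 0, 0)).1 = (n : ZMod p) ∧
      (g ((n : ZMod p) + 1, 0, 0)).1 = (n : ZMod p) + 1 := by
    intro n
    induction n with
    | zero => exact ⟨by simpa using hc0, by simpa using hc1⟩
    | succ n ih =>
      have e1 : ((n + 1 : ℕ) : ZMod p) = (n : ZMod p) + 1 := by push_cast; ring
      rw [e1]
      refine ⟨ih.2, ?_⟩
      rcases hstep ((n : ZMod p) + 1) with h | h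
      · rw [ih.2] at h
        exact h
      · exfalso
        have hcc : (g ((n : ZMod p) + 1 + 1, 0, 0)).1 = (g ((n : ZMod p), 0, 0)).1 := by
          rw [ih.1]
          linear_combination ih.2 - h
        exact h2 (by linear_combination hcinj _ _ hcc)
  have hfix : ∀ i : ZMod p, (g (i, 0, 0)).1 = i := by
    intro i
    obtain ⟨n, rfl⟩ := ZMod.natCast_zmod_surjective i
    exact (key n).1
  have hcolid : ∀ u : ZMod p × ZMod 2 × ZMod 2, (g u).1 = u.1 := fun u =>
    (hcu u).trans (hfix u.1)
  have hxiff : ∀ u v : ZMod p × ZMod 2 × ZMod 2, u.1 = v.1 →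
      ((g u).2.1 = (g v).2.1 ↔ u.2.1 = v.2.1) := by
    intro u v hcol
    rw [eq_x_iff h1 h2 u v hcol, eq_x_iff h1 h2 (g u) (g v) (by rw [hcolid, hcolid]; exact hcol)]
    constructor
    · rintro ⟨w, a1, a2, hw⟩
      have e : (g⁻¹ w).1 = w.1 := by rw [← hcolid (g⁻¹ w), perm_apply_inv_self']
      rw [hcolid u] at hw
      exact ⟨g⁻¹ w, (hg' _ _).mp (by rwa [perm_apply_inv_self']),
        (hg' _ _).mp (by rwa [perm_apply_inv_self']), by rw [e]; exact hw⟩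
    · rintro ⟨w, a1, a2, hw⟩
      exact ⟨g w, (hg' _ _).mpr a1, (hg' _ _).mpr a2, by rw [hcolid w, hcolid u]; exact hw⟩
  have hyiff : ∀ u v : ZMod p × ZMod 2 × ZMod 2, u.1 = v.1 →
      ((g u).2.2 = (g v).2.2 ↔ u.2.2 = v.2.2) := by
    intro u v hcol
    rw [eq_y_iff h1 h2 u v hcol, eq_y_iff h1 h2 (g u) (g v) (by rw [hcolid, hcolid]; exact hcol)]
    constructor
    · rintro ⟨w, a1, a2, hw⟩
      have e : (g⁻¹ w).1 = w.1 := by rw [← hcolid (g⁻¹ w), perm_apply_inv_self']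
      rw [hcolid u] at hw
      exact ⟨g⁻¹ w, (hg' _ _).mp (by rwa [perm_apply_inv_self']),
        (hg' _ _).mp (by rwa [perm_apply_inv_self']), by rw [e]; exact hw⟩
    · rintro ⟨w, a1, a2, hw⟩
      exact ⟨g w, (hg' _ _).mpr a1, (hg' _ _).mpr a2, by rw [hcolid w, hcolid u]; exact hw⟩
  have hgx : ∀ u : ZMod p × ZMod 2 × ZMod 2, (g u).2.1 = u.2.1 + (g (u.1, 0, 0)).2.1 := by
    intro u
    have hiff := hxiff u (u.1, 0, 0) rfl
    rcases z2cases u.2.1 with h0 | h0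
    · rw [h0, zero_add]
      exact hiff.mpr h0
    · have hne : (g u).2.1 ≠ (g (u.1, 0, 0)).2.1 := fun h => by
        have := hiff.mp h
        rw [h0] at this
        exact one_ne_zero (this : (1 : ZMod 2) = 0)
      rw [h0, z2ne _ _ (fun h => hne h.symm)]
      ring
  have hgy : ∀ u : ZMod p × ZMod 2 × ZMod 2, (g u).2.2 = u.2.2 + (g (u.1, 0, 0)).2.2 := by
    intro u
    have hiff := hyiff u (u.1, 0, 0) rfl
    rcases z2cases u.2.2 with h0 | h0
    · rw [h0, zero_add]
      exact hiff.mpr h0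
    · have hne : (g u).2.2 ≠ (g (u.1, 0, 0)).2.2 := fun h => by
        have := hiff.mp h
        rw [h0] at this
        exact one_ne_zero (this : (1 : ZMod 2) = 0)
      rw [h0, z2ne _ _ (fun h => hne h.symm)]
      ring
  have hrel : ∀ i : ZMod p, (g (i + 1, 0, 0)).2.1 = (g (i, 0, 0)).2.2 := by
    intro i
    have hadj := (hg' (i, 0, 0) (i + 1, 0, 0)).mpr
      ((cp22_adj h1 _ _).mpr (Or.inl ⟨rfl, rfl⟩))
    rw [cp22_adj h1] at hadj
    rcases hadj with ⟨-, cc⟩ | ⟨aa, -⟩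
    · exact cc
    · rw [hcolid, hcolid] at aa
      exact absurd (show (2 : ZMod p) = 0 by linear_combination -aa) h2
  refine ⟨fun i => (g (i, 0, 0)).2.2, Equiv.ext fun u => ?_⟩
  have hx' := hgx u
  have hy' := hgy u
  have hα : (g (u.1, 0, 0)).2.1 = (g (u.1 - 1, 0, 0)).2.2 := by
    have := hrel (u.1 - 1)
    rwa [sub_add_cancel] at this
  rw [Fr_apply]
  refine Prod.ext ?_ (Prod.ext ?_ ?_)
  · rw [hcolid u]
    exact (add_zero u.1).symm
  · rw [hx', hα]
  · exact hy'

lemma aut_form (hp : p.Prime) (h1 : (1 : ZMod p) ≠ 0) (h2 : (2 : ZMod p) ≠ 0)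
    (h4 : (4 : ZMod p) ≠ 0) (g : Equiv.Perm (ZMod p × ZMod 2 × ZMod 2))
    (hg : g ∈ autSubgroup (Cp22 p)) :
    (∃ k ε, g = Fr k ε) ∨ (∃ k ε, g = Gr k ε) := by
  have hg' : ∀ u v, (Cp22 p).Adj (g u) (g v) ↔ (Cp22 p).Adj u v := hg
  have hadj := (hg' (0, 0, 0) (1, 0, 0)).mpr
    ((cp22_adj h1 ((0 : ZMod p), (0 : ZMod 2), (0 : ZMod 2)) (1, 0, 0)).mpr
      (Or.inl ⟨(zero_add 1).symm, rfl⟩))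
  rw [cp22_adj h1] at hadj
  rcases hadj with ⟨hA, -⟩ | ⟨hA, -⟩
  · -- rotation case
    left
    set P := Fr (g ((0 : ZMod p), (0 : ZMod 2), (0 : ZMod 2))).1 (fun _ => 0) with hP
    have hhmem : P⁻¹ * g ∈ autSubgroup (Cp22 p) :=
      (autSubgroup _).mul_mem ((autSubgroup _).inv_mem (Fr_mem h1 _ _)) hg
    have h0 : ((P⁻¹ * g) ((0 : ZMod p), (0 : ZMod 2), (0 : ZMod 2))).1 = 0 := by
      rw [Equiv.Perm.mul_apply, hP, Fr_inv_apply]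
      exact sub_self _
    have hone : ((P⁻¹ * g) ((1 : ZMod p), (0 : ZMod 2), (0 : ZMod 2))).1 = 1 := by
      rw [Equiv.Perm.mul_apply, hP, Fr_inv_apply]
      show (g ((1 : ZMod p), (0 : ZMod 2), (0 : ZMod 2))).1 - _ = 1
      linear_combination hA
    obtain ⟨ε, hε⟩ := rigid hp h1 h2 h4 _ hhmem h0 hone
    refine ⟨(g ((0 : ZMod p), (0 : ZMod 2), (0 : ZMod 2))).1, ε, ?_⟩
    have hcomp : P * Fr 0 ε = Fr (g ((0 : ZMod p), (0 : ZMod 2), (0 : ZMod 2))).1 ε := by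
      refine Equiv.ext fun u => ?_
      rw [Equiv.Perm.mul_apply, hP]
      simp only [Fr_apply]
      simp [Prod.ext_iff]
    calc g = P * (P⁻¹ * g) := (mul_inv_cancel_left P g).symm
    _ = P * Fr 0 ε := by rw [hε]
    _ = Fr (g ((0 : ZMod p), (0 : ZMod 2), (0 : ZMod 2))).1 ε := hcomp
  · -- reflection case
    right
    set P := Gr (g ((0 : ZMod p), (0 : ZMod 2), (0 : ZMod 2))).1 (fun _ => 0) with hP
    have hhmem : P⁻¹ * g ∈ autSubgroup (Cp22 p) :=
      (autSubgroup _).mul_mem ((autSubgroup _).inv_mem (Gr_mem h1 _ _)) hg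
    have h0 : ((P⁻¹ * g) ((0 : ZMod p), (0 : ZMod 2), (0 : ZMod 2))).1 = 0 := by
      rw [Equiv.Perm.mul_apply, hP, Gr_inv_apply]
      exact sub_self _
    have hone : ((P⁻¹ * g) ((1 : ZMod p), (0 : ZMod 2), (0 : ZMod 2))).1 = 1 := by
      rw [Equiv.Perm.mul_apply, hP, Gr_inv_apply]
      show _ - (g ((1 : ZMod p), (0 : ZMod 2), (0 : ZMod 2))).1 = 1
      linear_combination hA
    obtain ⟨ε, hε⟩ := rigid hp h1 h2 h4 _ hhmem h0 hone
    refine ⟨(g ((0 : ZMod p), (0 : ZMod 2), (0 : ZMod 2))).1, ε, ?_⟩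
    have hcomp : P * Fr 0 ε = Gr (g ((0 : ZMod p), (0 : ZMod 2), (0 : ZMod 2))).1 ε := by
      refine Equiv.ext fun u => ?_
      rw [Equiv.Perm.mul_apply, hP]
      simp only [Fr_apply, Gr_apply]
      simp [Prod.ext_iff]
    calc g = P * (P⁻¹ * g) := (mul_inv_cancel_left P g).symm
    _ = P * Fr 0 ε := by rw [hε]
    _ = Gr (g ((0 : ZMod p), (0 : ZMod 2), (0 : ZMod 2))).1 ε := hcomp

def FGmap {p : ℕ} (h1 : (1 : ZMod p) ≠ 0) :
    Bool × ZMod p × (ZMod p → ZMod 2) → ↥(autSubgroup (Cp22 p))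
  | (false, k, ε) => ⟨Fr k ε, Fr_mem h1 k ε⟩
  | (true, k, ε) => ⟨Gr k ε, Gr_mem h1 k ε⟩

theorem stmt15' (p : ℕ) (hp : p.Prime) (hodd : Odd p) :
    Nat.card ↥(autSubgroup (Cp22 p)) = 2 ^ (p + 1) * p := by
  haveI : NeZero p := ⟨hp.ne_zero⟩
  haveI : Fact (1 < p) := ⟨hp.one_lt⟩
  have hpne2 : p ≠ 2 := by
    rintro rfl
    rw [Nat.odd_iff] at hodd
    omega
  have h1 : (1 : ZMod p) ≠ 0 := one_ne_zero
  have h2 : (2 : ZMod p) ≠ 0 := by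
    intro h
    rw [show ((2 : ZMod p)) = ((2 : ℕ) : ZMod p) by norm_cast,
      ZMod.natCast_eq_zero_iff] at h
    exact hpne2 ((Nat.prime_dvd_prime_iff_eq hp Nat.prime_two).mp h)
  have h4 : (4 : ZMod p) ≠ 0 := by
    intro h
    rw [show ((4 : ZMod p)) = ((4 : ℕ) : ZMod p) by norm_cast,
      ZMod.natCast_eq_zero_iff] at h
    have hdvd : p ∣ 2 := hp.dvd_of_dvd_pow (n := 2) (by norm_num; exact h)
    exact hpne2 ((Nat.prime_dvd_prime_iff_eq hp Nat.prime_two).mp hdvd)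
  have hinj : Function.Injective (FGmap (p := p) h1) := by
    rintro ⟨s, k, ε⟩ ⟨s', k', ε'⟩ hts
    have hts' := congrArg Subtype.val hts
    cases s <;> cases s' <;> simp only [FGmap] at hts'
    · have hv : ∀ v, Fr k ε v = Fr k' ε' v := fun v => by rw [hts']
      have hk : k = k' := by
        have := congrArg Prod.fst (hv (0, 0, 0))
        simp only [Fr_apply] at this
        linear_combination this
      have hε : ε = ε' := by
        funext i
        have := congrArg (fun z => z.2.2) (hv (i, 0, 0))
        simp only [Fr_apply] at this
        linear_combination this
      rw [hk, hε]
    · exfalso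
      have hv : ∀ v, Fr k ε v = Gr k' ε' v := fun v => by rw [hts']
      have e0 := congrArg Prod.fst (hv (0, 0, 0))
      have e1 := congrArg Prod.fst (hv (1, 0, 0))
      simp only [Fr_apply, Gr_apply] at e0 e1
      exact h2 (by linear_combination e1 - e0)
    · exfalso
      have hv : ∀ v, Gr k ε v = Fr k' ε' v := fun v => by rw [hts']
      have e0 := congrArg Prod.fst (hv (0, 0, 0))
      have e1 := congrArg Prod.fst (hv (1, 0, 0))
      simp only [Fr_apply, Gr_apply] at e0 e1
      exact h2 (by linear_combination e0 - e1)
    · have hv : ∀ v, Gr k ε v = Gr k' ε' v := fun v => by rw [hts']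
      have hk : k = k' := by
        have := congrArg Prod.fst (hv (0, 0, 0))
        simp only [Gr_apply] at this
        linear_combination this
      have hε : ε = ε' := by
        funext i
        have := congrArg (fun z => z.2.1) (hv (i, 0, 0))
        simp only [Gr_apply] at this
        linear_combination this
      rw [hk, hε]
  have hsurj : Function.Surjective (FGmap (p := p) h1) := by
    rintro ⟨g, hg⟩
    rcases aut_form hp h1 h2 h4 g hg with ⟨k, ε, rfl⟩ | ⟨k, ε, rfl⟩
    · exact ⟨(false, k, ε), rfl⟩
    · exact ⟨(true, k, ε), rfl⟩
  have hcard := Nat.card_congr (Equiv.ofBijective _ ⟨hinj, hsurj⟩)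
  rw [← hcard, Nat.card_prod, Nat.card_prod, Nat.card_fun, Nat.card_zmod, Nat.card_zmod]
  have hb : Nat.card Bool = 2 := by simp [Nat.card_eq_fintype_card]
  rw [hb, pow_succ]
  ring

end Aux15

/-- For an odd prime `p`, the automorphism group of `C(2;p,2)`
has order `2^(p+1) · p`. -/
theorem stmt15 (p : ℕ) (hp : p.Prime) (hodd : Odd p) :
    Nat.card ↥(autSubgroup (Cp22 p)) = 2 ^ (p + 1) * p :=
  stmt15' p hp hodd

end HAT
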